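/- (Uniqueness of normal form) For every A ∈ L'', if A = A' and A = A'' are both provable in the equational calculus I'' with A' and A'' normal, then A' and A'' coincide (are identical terms). -/
import Mathlib


/-- Binary trees: the set `L₁` generated by `□` and `∧`. -/
inductive L1 : Type
  | box : L1
  | wedge : L1 → L1 → L1
  deriving DecidableEq

namespace L1

/-- `|X|`: the number of occurrences of `□` in `X`. -/
def leaves : L1 → ℕ
  | box => 1
  | wedge X Y => X.leaves + Y.leaves

/-- Insertion `X ◁ₙ Z` in `L₁` (total extension of the partial operation;
on its domain `1 ≤ n ≤ |X|` it agrees with the defining clauses). -/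
def ins : L1 → ℕ → L1 → L1
  | box, _, Z => Z
  | wedge X Y, n, Z =>
      if n ≤ X.leaves then wedge (X.ins n Z) Y else wedge X (Y.ins (n - X.leaves) Z)

end L1

/-- Raw terms over the generator `2` and the insertion operations `◁ₙ`. -/
inductive T2 : Type
  | two : T2
  | ins : T2 → ℕ → T2 → T2
  deriving DecidableEq

namespace T2

/-- `|A|` for terms: `|2| = 2` and `|A ◁ₙ B| = |A| + |B| - 1`. -/
def size : T2 → ℕ
  | two => 2
  | ins A _ B => A.size + B.size - 1

/-- Membership in `L''`: each insertion `A ◁ₙ B` requires `1 ≤ n ≤ |A|`. -/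
def WF : T2 → Prop
  | two => True
  | ins A n B => A.WF ∧ B.WF ∧ 1 ≤ n ∧ n ≤ A.size

/-- The interpretation `v : L'' → L₁`, with `v 2 = □∧□` and
`v (A ◁ₙ B) = v A ◁ₙ v B`. -/
def val : T2 → L1
  | two => L1.wedge L1.box L1.box
  | ins A n B => A.val.ins n B.val

end T2

/-- The equational calculus `I''` on `L''`: the congruence (with respect to the
operations `◁ₙ`, on well-formed, i.e. defined, terms) generated by the axioms
(assoc 1) and (assoc 2). -/
inductive I2 : T2 → T2 → Prop
  | refl (A : T2) (h : A.WF) : I2 A A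
  | symm {A B : T2} : I2 A B → I2 B A
  | trans {A B C : T2} : I2 A B → I2 B C → I2 A C
  | congr {A B C D : T2} {n : ℕ} : I2 A B → I2 C D →
      (T2.ins A n C).WF → (T2.ins B n D).WF →
      I2 (T2.ins A n C) (T2.ins B n D)
  | assoc1 {A B C : T2} {n m : ℕ} :
      ((A.ins n B).ins m C).WF → n ≤ m → m < n + B.size →
      I2 ((A.ins n B).ins m C) (A.ins n (B.ins (m - n + 1) C))
  | assoc2 {A B C : T2} {n m : ℕ} :
      ((A.ins n B).ins m C).WF → n + B.size ≤ m →
      I2 ((A.ins n B).ins m C) ((A.ins (m - B.size + 1) C).ins n B)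

/-- A term of `L''` is *normal* when it has no subterm of the form
`(X ◁ₙ Y) ◁ₘ Z` with `n ≤ m`. -/
def T2.Normal : T2 → Prop
  | T2.two => True
  | T2.ins A m B => A.Normal ∧ B.Normal ∧ ∀ (X : T2) (n : ℕ) (Y : T2), A = T2.ins X n Y → m < n

section Aux

namespace L1

lemma leaves_pos (X : L1) : 1 ≤ X.leaves := by
  induction X with
  | box => simp [leaves]
  | wedge X Y ihX ihY => simp [leaves]; omega

lemma leaves_ins (X Z : L1) (n : ℕ) (hn1 : 1 ≤ n) (hn2 : n ≤ X.leaves) :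
    (X.ins n Z).leaves = X.leaves + Z.leaves - 1 := by
  induction X generalizing n with
  | box =>
      simp [leaves] at hn2
      simp [ins, leaves]
  | wedge X Y ihX ihY =>
      simp only [leaves] at hn2 ⊢
      by_cases h : n ≤ X.leaves
      · have hx := ihX n hn1 h
        have := Z.leaves_pos
        simp [ins, h, leaves, hx]
        omega
      · have h1 : 1 ≤ n - X.leaves := by omega
        have h2 : n - X.leaves ≤ Y.leaves := by omega
        have hy := ihY (n - X.leaves) h1 h2
        have := Z.leaves_pos
        have := X.leaves_pos
        simp [ins, h, leaves, hy]
        omega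

lemma ins_assoc1 (X Y Z : L1) (n m : ℕ) (hn1 : 1 ≤ n) (hnX : n ≤ X.leaves)
    (hnm : n ≤ m) (hm : m < n + Y.leaves) :
    (X.ins n Y).ins m Z = X.ins n (Y.ins (m - n + 1) Z) := by
  induction X generalizing n m with
  | box =>
      simp [leaves] at hnX
      have hn : n = 1 := by omega
      subst hn
      simp [ins]
      congr 1
      omega
  | wedge X1 X2 ihX1 ihX2 =>
      simp only [leaves] at hnX
      have hY := Y.leaves_pos
      by_cases h : n ≤ X1.leaves
      · have hlv := leaves_ins X1 Y n hn1 h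
        have hmle : m ≤ (X1.ins n Y).leaves := by rw [hlv]; omega
        simp only [ins, if_pos h, if_pos hmle]
        rw [ihX1 n m hn1 h hnm hm]
      · have hmle : ¬ m ≤ X1.leaves := by omega
        simp only [ins, if_neg h, if_neg hmle]
        have h1 : 1 ≤ n - X1.leaves := by omega
        have h2 : n - X1.leaves ≤ X2.leaves := by omega
        have h3 : n - X1.leaves ≤ m - X1.leaves := by omega
        have h4 : m - X1.leaves < n - X1.leaves + Y.leaves := by omega
        rw [ihX2 (n - X1.leaves) (m - X1.leaves) h1 h2 h3 h4]
        have e : m - X1.leaves - (n - X1.leaves) + 1 = m - n + 1 := by omega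
        rw [e]

lemma ins_assoc2 (X Y Z : L1) (n m : ℕ) (hn1 : 1 ≤ n) (hnX : n ≤ X.leaves)
    (hm1 : n + Y.leaves ≤ m) (hm2 : m ≤ X.leaves + Y.leaves - 1) :
    (X.ins n Y).ins m Z = (X.ins (m - Y.leaves + 1) Z).ins n Y := by
  induction X generalizing n m with
  | box =>
      have hY := Y.leaves_pos
      simp [leaves] at hnX hm2
      omega
  | wedge X1 X2 ihX1 ihX2 =>
      simp only [leaves] at hnX hm2
      have hY := Y.leaves_pos
      have hZ := Z.leaves_pos
      have hX1 := X1.leaves_pos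
      have hX2 := X2.leaves_pos
      by_cases h : n ≤ X1.leaves
      · have hlvY := leaves_ins X1 Y n hn1 h
        by_cases h' : m ≤ X1.leaves + Y.leaves - 1
        · -- both go left
          have hk : m - Y.leaves + 1 ≤ X1.leaves := by omega
          have hk1 : 1 ≤ m - Y.leaves + 1 := by omega
          have hlvZ := leaves_ins X1 Z (m - Y.leaves + 1) hk1 hk
          have hmle : m ≤ (X1.ins n Y).leaves := by rw [hlvY]; omega
          have hn' : n ≤ (X1.ins (m - Y.leaves + 1) Z).leaves := by rw [hlvZ]; omega
          simp only [ins, if_pos h, if_pos hmle, if_pos hk, if_pos hn']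
          rw [ihX1 n m hn1 h hm1 h']
        · -- second goes right
          have hmle : ¬ m ≤ (X1.ins n Y).leaves := by rw [hlvY]; omega
          have hk : ¬ (m - Y.leaves + 1 ≤ X1.leaves) := by omega
          simp only [ins, if_pos h, if_neg hmle, if_neg hk, hlvY, if_neg h']
          have e : m - (X1.leaves + Y.leaves - 1) = m - Y.leaves + 1 - X1.leaves := by omega
          rw [e]
      · -- first goes right
        have hk : ¬ (m - Y.leaves + 1 ≤ X1.leaves) := by omega
        have hmle : ¬ m ≤ X1.leaves := by omega
        simp only [ins, if_neg h, if_neg hmle, if_neg hk]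
        have h1 : 1 ≤ n - X1.leaves := by omega
        have h2 : n - X1.leaves ≤ X2.leaves := by omega
        have h3 : n - X1.leaves + Y.leaves ≤ m - X1.leaves := by omega
        have h4 : m - X1.leaves ≤ X2.leaves + Y.leaves - 1 := by omega
        rw [ihX2 (n - X1.leaves) (m - X1.leaves) h1 h2 h3 h4]
        congr 3
        omega

lemma eq_wedge_of_two_le_leaves (X : L1) (h : 2 ≤ X.leaves) :
    ∃ a b, X = wedge a b := by
  cases X with
  | box => simp [leaves] at h
  | wedge a b => exact ⟨a, b, rfl⟩

end L1

namespace T2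

lemma two_le_size {A : T2} (h : A.WF) : 2 ≤ A.size := by
  induction A with
  | two => simp [size]
  | ins A n B ihA ihB =>
      obtain ⟨hA, hB, _, _⟩ := h
      have := ihA hA
      have := ihB hB
      simp only [size]
      omega

lemma leaves_val {A : T2} (h : A.WF) : A.val.leaves = A.size := by
  induction A with
  | two => simp [val, size, L1.leaves]
  | ins A n B ihA ihB =>
      obtain ⟨hA, hB, hn1, hn2⟩ := h
      have h2 := two_le_size hA
      have h2' := two_le_size hB
      simp only [val, size]
      rw [L1.leaves_ins _ _ _ hn1 (by rw [ihA hA]; exact hn2), ihA hA, ihB hB]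

end T2

lemma I2.wf {A B : T2} (h : I2 A B) : A.WF ∧ B.WF := by
  induction h with
  | refl A h => exact ⟨h, h⟩
  | symm _ ih => exact ⟨ih.2, ih.1⟩
  | trans _ _ ih1 ih2 => exact ⟨ih1.1, ih2.2⟩
  | congr _ _ h1 h2 _ _ => exact ⟨h1, h2⟩
  | @assoc1 A B C n m hwf hnm hm =>
      refine ⟨hwf, ?_⟩
      obtain ⟨⟨hA, hB, hn1, hn2⟩, hC, hm1, hm2⟩ := hwf
      have := T2.two_le_size hA
      have := T2.two_le_size hB
      have := T2.two_le_size hC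
      simp only [T2.size] at hm2
      exact ⟨hA, ⟨hB, hC, by omega, by omega⟩, hn1, hn2⟩
  | @assoc2 A B C n m hwf hm =>
      refine ⟨hwf, ?_⟩
      obtain ⟨⟨hA, hB, hn1, hn2⟩, hC, hm1, hm2⟩ := hwf
      have := T2.two_le_size hA
      have := T2.two_le_size hB
      have := T2.two_le_size hC
      simp only [T2.size] at hm2 ⊢
      exact ⟨⟨hA, hC, by omega, by omega⟩, hB, hn1, by simp only [T2.size]; omega⟩

lemma I2.val_eq {A B : T2} (h : I2 A B) : A.val = B.val := by
  induction h with
  | refl A h => rfl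
  | symm _ ih => exact ih.symm
  | trans _ _ ih1 ih2 => exact ih1.trans ih2
  | congr _ _ _ _ ih1 ih2 => simp only [T2.val, ih1, ih2]
  | @assoc1 A B C n m hwf hnm hm =>
      obtain ⟨⟨hA, hB, hn1, hn2⟩, hC, hm1, hm2⟩ := hwf
      simp only [T2.val]
      exact L1.ins_assoc1 A.val B.val C.val n m hn1
        (by rw [T2.leaves_val hA]; exact hn2) hnm
        (by rw [T2.leaves_val hB]; exact hm)
  | @assoc2 A B C n m hwf hm =>
      obtain ⟨⟨hA, hB, hn1, hn2⟩, hC, hm1, hm2⟩ := hwf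
      simp only [T2.size] at hm2
      simp only [T2.val]
      rw [L1.ins_assoc2 A.val B.val C.val n m hn1
        (by rw [T2.leaves_val hA]; exact hn2)
        (by rw [T2.leaves_val hB]; exact hm)
        (by rw [T2.leaves_val hA, T2.leaves_val hB]; exact hm2),
        T2.leaves_val hB]

/-- Inverse of `val` on normal terms. -/
def phi : L1 → T2
  | .box => .two
  | .wedge .box .box => .two
  | .wedge .box (.wedge r1 r2) => .ins .two 2 (phi (.wedge r1 r2))
  | .wedge (.wedge l1 l2) .box => .ins .two 1 (phi (.wedge l1 l2))
  | .wedge (.wedge l1 l2) (.wedge r1 r2) =>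
      .ins (.ins .two 2 (phi (.wedge r1 r2))) 1 (phi (.wedge l1 l2))

lemma normal_shape (A : T2) (hwf : A.WF) (hn : A.Normal) :
    A = .two ∨ (∃ B, A = .ins .two 1 B) ∨ (∃ B, A = .ins .two 2 B) ∨
      (∃ B C, A = .ins (.ins .two 2 B) 1 C) := by
  induction A with
  | two => exact Or.inl rfl
  | ins A₀ n B ih₀ ihB =>
      obtain ⟨h0, hB, hn1, hn2⟩ := hwf
      obtain ⟨n0, nB, hsp⟩ := hn
      rcases ih₀ h0 n0 with h | ⟨B', h⟩ | ⟨B', h⟩ | ⟨B', C', h⟩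
      · subst h
        simp only [T2.size] at hn2
        interval_cases n
        · exact Or.inr (Or.inl ⟨B, rfl⟩)
        · exact Or.inr (Or.inr (Or.inl ⟨B, rfl⟩))
      · subst h
        have := hsp _ _ _ rfl
        omega
      · subst h
        have := hsp _ _ _ rfl
        have hn' : n = 1 := by omega
        subst hn'
        exact Or.inr (Or.inr (Or.inr ⟨B', B, rfl⟩))
      · subst h
        have := hsp _ _ _ rfl
        omega

lemma val_ne_box {A : T2} (h : A.WF) : ∃ a b, A.val = L1.wedge a b := by
  apply L1.eq_wedge_of_two_le_leaves
  rw [T2.leaves_val h]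
  exact T2.two_le_size h

lemma phi_val : ∀ (N : ℕ) (A : T2), A.size ≤ N → A.WF → A.Normal → phi A.val = A := by
  intro N
  induction N with
  | zero => intro A hs hwf _; have := T2.two_le_size hwf; omega
  | succ N ih =>
      intro A hs hwf hn
      rcases normal_shape A hwf hn with h | ⟨B, h⟩ | ⟨B, h⟩ | ⟨B, C, h⟩
      · subst h; rfl
      · subst h
        obtain ⟨-, hB, -, -⟩ := hwf
        obtain ⟨-, hBn, -⟩ := hn
        obtain ⟨a, b, hab⟩ := val_ne_box hB
        have hBs : B.size ≤ N := by
          have := T2.two_le_size hB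
          simp only [T2.size] at hs
          omega
        have hval : (T2.ins T2.two 1 B).val = L1.wedge B.val L1.box := by
          simp [T2.val, T2.ins, L1.ins, L1.leaves]
        rw [hval, hab]
        simp only [phi]
        rw [← hab, ih B hBs hB hBn]
      · subst h
        obtain ⟨-, hB, -, -⟩ := hwf
        obtain ⟨-, hBn, -⟩ := hn
        obtain ⟨a, b, hab⟩ := val_ne_box hB
        have hBs : B.size ≤ N := by
          have := T2.two_le_size hB
          simp only [T2.size] at hs
          omega
        have hval : (T2.ins T2.two 2 B).val = L1.wedge L1.box B.val := by
          simp [T2.val, L1.ins, L1.leaves]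
        rw [hval, hab]
        simp only [phi]
        rw [← hab, ih B hBs hB hBn]
      · subst h
        obtain ⟨⟨-, hB, -, -⟩, hC, -, -⟩ := hwf
        obtain ⟨⟨-, hBn, -⟩, hCn, -⟩ := hn
        obtain ⟨a, b, hab⟩ := val_ne_box hB
        obtain ⟨c, d, hcd⟩ := val_ne_box hC
        have hBs : B.size ≤ N := by
          have := T2.two_le_size hB
          have := T2.two_le_size hC
          simp only [T2.size] at hs
          omega
        have hCs : C.size ≤ N := by
          have := T2.two_le_size hB
          have := T2.two_le_size hC
          simp only [T2.size] at hs
          omega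
        have hval : (T2.ins (T2.ins T2.two 2 B) 1 C).val = L1.wedge C.val B.val := by
          simp [T2.val, L1.ins, L1.leaves]
        rw [hval, hab, hcd]
        simp only [phi]
        rw [← hab, ← hcd, ih B hBs hB hBn, ih C hCs hC hCn]

end Aux


theorem normal_form_unique (A A' A'' : T2) (hA : A.WF)
    (h1 : I2 A A') (h2 : I2 A A'') (hn1 : A'.Normal) (hn2 : A''.Normal) :
    A' = A'' := by
  have hw1 := h1.wf.2
  have hw2 := h2.wf.2
  have hv : A'.val = A''.val := h1.val_eq.symm.trans h2.val_eq
  have e1 := phi_val A'.size A' le_rfl hw1 hn1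
  have e2 := phi_val A''.size A'' le_rfl hw2 hn2
  rw [← e1, ← e2, hv]
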